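/- For every (h,x) ∈ ℝ² and t > 0, the functions p and p̂ are symmetric in x: p(h,x;t) = p(h,-x;t) and p̂(h,x;t) = p̂(h,-x;t). -/

import Mathlib

open MeasureTheory Filter

noncomputable section

/-- The left wedge contour crossing the real axis at `c`: it runs from `∞·e^{-2πi/3}`
to `∞·e^{2πi/3}` and meets the real axis at `c`. -/
def wedgeL (c : ℝ) (s : ℝ) : ℂ :=
  Complex.ofReal (c - |s| / 2) + Complex.I * Complex.ofReal (s * Real.sqrt 3 / 2)

/-- The right wedge contour crossing the real axis at `c`: the negation (as a set) of
`wedgeL (-c)`, oriented from `∞·e^{-πi/3}` to `∞·e^{πi/3}`. -/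
def wedgeR (c : ℝ) (s : ℝ) : ℂ := -wedgeL (-c) (-s)

/-- The contour `Γ_L`, crossing the real axis at `-1/2 ∈ (-1,0)`. -/
def gammaL : ℝ → ℂ := wedgeL (-1/2)

/-- The contour `Γ_R = -Γ_L`, crossing the real axis at `1/2 ∈ (0,1)`. -/
def gammaR : ℝ → ℂ := wedgeR (1/2)

/-- `f_{h,x;t}(w) = exp(-(t/3)w³ + x·w² + h·w)`. -/
def fExp (h x t : ℝ) (w : ℂ) : ℂ :=
  Complex.exp (-(t : ℂ) / 3 * w ^ 3 + (x : ℂ) * w ^ 2 + (h : ℂ) * w)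

/-- `S_k(W;W') = Σ w_i^k - Σ (w'_i)^k`. -/
def Spow {n n' : ℕ} (k : ℕ) (W : Fin n → ℂ) (W' : Fin n' → ℂ) : ℂ :=
  (∑ i, W i ^ k) - ∑ i, W' i ^ k

/-- `H(W;W') = (1/12)S₁⁴ + (1/4)S₂² - (1/3)S₁S₃`. -/
def Hfun {n n' : ℕ} (W : Fin n → ℂ) (W' : Fin n' → ℂ) : ℂ :=
  (1 / 12) * Spow 1 W W' ^ 4 + (1 / 4) * Spow 2 W W' ^ 2
    - (1 / 3) * Spow 1 W W' * Spow 3 W W'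

/-- The Cauchy determinant `C(W;W') = det[1/(w_i - w'_j)]`. -/
def CauchyDet {n : ℕ} (W W' : Fin n → ℂ) : ℂ :=
  Matrix.det (Matrix.of fun i j => 1 / (W i - W' j))

/-- The integrand `I_n(U;V)` in its explicit product form. -/
def integrandI (n : ℕ) (h x t : ℝ) (U V : Fin n → ℂ) : ℂ :=
  (-1 : ℂ) ^ n * Complex.exp (-(2 / 3 : ℂ) * (t : ℂ) + 2 * (h : ℂ)) *
    ((∏ i, ∏ j, if i < j then (U i - U j) ^ 2 * (V i - V j) ^ 2 else 1) /
      ∏ i, ∏ j, (U i - V j) ^ 2) *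
    (∏ i, ((1 + V i) * (1 - U i) * fExp h x t (U i)) /
      ((1 + U i) * (1 - V i) * fExp h x t (V i))) *
    Hfun (Fin.snoc U 1) (Fin.snoc V (-1))

/-- The integrand `Î_n(U;V) = [2/Σ(-u_i+v_i)]·I_n(U;V)`. -/
def integrandIhat (n : ℕ) (h x t : ℝ) (U V : Fin n → ℂ) : ℂ :=
  (2 / ∑ i, (-U i + V i)) * integrandI n h x t U V

/-- The `2n`-fold contour integral `∫_{Γ_L^n × Γ_R^n} F(U;V) ∏ du_i/(2πi) ∏ dv_i/(2πi)`. -/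
def contourProdIntegral (n : ℕ) (F : (Fin n → ℂ) → (Fin n → ℂ) → ℂ) : ℂ :=
  ∫ sr : (Fin n → ℝ) × (Fin n → ℝ),
    F (fun i => gammaL (sr.1 i)) (fun i => gammaR (sr.2 i)) *
      ((∏ i, deriv gammaL (sr.1 i) / (2 * Real.pi * Complex.I)) *
        ∏ i, deriv gammaR (sr.2 i) / (2 * Real.pi * Complex.I))

/-- `p(h,x;t)` as a complex series of contour integrals. -/
def pC (h x t : ℝ) : ℂ :=
  ∑' n : ℕ, (1 / (Nat.factorial (n + 1) : ℂ) ^ 2) *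
    contourProdIntegral (n + 1) (integrandI (n + 1) h x t)

/-- The joint density function `p(h,x;t)`. -/
def pFun (h x t : ℝ) : ℝ := (pC h x t).re

/-- `p̂(h,x;t)` as a complex series of contour integrals. -/
def pHatC (h x t : ℝ) : ℂ :=
  ∑' n : ℕ, (1 / (Nat.factorial (n + 1) : ℂ) ^ 2) *
    contourProdIntegral (n + 1) (integrandIhat (n + 1) h x t)

/-- The joint density function `p̂(h,x;t)`. -/
def pHatFun (h x t : ℝ) : ℝ := (pHatC h x t).re




/-! ### Auxiliary lemmas for the symmetry proof -/

lemma gammaR_eq_neg (s : ℝ) : gammaR s = -gammaL (-s) := by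
  have h : (-(1/2) : ℝ) = -1/2 := by norm_num
  rw [gammaR, gammaL, wedgeR, h]

lemma gammaL_eq_neg (s : ℝ) : gammaL s = -gammaR (-s) := by
  rw [gammaR_eq_neg, neg_neg, neg_neg]

lemma deriv_gammaR_eq (s : ℝ) : deriv gammaR s = deriv gammaL (-s) := by
  have hfun : gammaR = fun s => -gammaL (-s) := funext gammaR_eq_neg
  rw [hfun, deriv.fun_neg, deriv_comp_neg, neg_neg]

lemma deriv_gammaL_eq (s : ℝ) : deriv gammaL s = deriv gammaR (-s) := by
  rw [deriv_gammaR_eq, neg_neg]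

lemma fExp_ratio_neg (h x t : ℝ) (u v : ℂ) :
    ((1 + v) * (1 - u) * fExp h (-x) t u) / ((1 + u) * (1 - v) * fExp h (-x) t v)
      = ((1 + -u) * (1 - -v) * fExp h x t (-v)) / ((1 + -v) * (1 - -u) * fExp h x t (-u)) := by
  have hab : ∀ (a b A B : ℂ),
      (a * Complex.exp A) / (b * Complex.exp B) = (a / b) * Complex.exp (A - B) := by
    intro a b A B
    rw [mul_div_mul_comm, ← Complex.exp_sub]
  rw [fExp, fExp, fExp, fExp, hab, hab]
  congr 1
  · ring
  · congr 1
    push_cast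
    ring

lemma Spow_snoc {n : ℕ} (k : ℕ) (W W' : Fin n → ℂ) (c c' : ℂ) :
    Spow k (Fin.snoc W c) (Fin.snoc W' c')
      = ((∑ i, W i ^ k) + c ^ k) - ((∑ i, W' i ^ k) + c' ^ k) := by
  simp [Spow, Fin.sum_univ_castSucc]

lemma sum_neg_pow {n : ℕ} (W : Fin n → ℂ) (k : ℕ) :
    ∑ i, (-W i) ^ k = (-1) ^ k * ∑ i, W i ^ k := by
  rw [Finset.mul_sum]
  exact Finset.sum_congr rfl fun i _ => by rw [neg_pow]

lemma Hfun_neg {n : ℕ} (U V : Fin n → ℂ) :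
    Hfun (Fin.snoc (fun i => -V i) 1) (Fin.snoc (fun i => -U i) (-1 : ℂ))
      = Hfun (Fin.snoc U 1) (Fin.snoc V (-1 : ℂ)) := by
  have h1 : Spow 1 (Fin.snoc (fun i => -V i) 1) (Fin.snoc (fun i => -U i) (-1 : ℂ))
      = Spow 1 (Fin.snoc U 1) (Fin.snoc V (-1 : ℂ)) := by
    simp only [Spow_snoc, sum_neg_pow]; ring
  have h2 : Spow 2 (Fin.snoc (fun i => -V i) 1) (Fin.snoc (fun i => -U i) (-1 : ℂ))
      = -Spow 2 (Fin.snoc U 1) (Fin.snoc V (-1 : ℂ)) := by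
    simp only [Spow_snoc, sum_neg_pow]; ring
  have h3 : Spow 3 (Fin.snoc (fun i => -V i) 1) (Fin.snoc (fun i => -U i) (-1 : ℂ))
      = Spow 3 (Fin.snoc U 1) (Fin.snoc V (-1 : ℂ)) := by
    simp only [Spow_snoc, sum_neg_pow]; ring
  rw [Hfun, Hfun, h1, h2, h3]
  ring

lemma integrandI_neg (n : ℕ) (h x t : ℝ) (U V : Fin n → ℂ) :
    integrandI n h x t (fun i => -V i) (fun i => -U i) = integrandI n h (-x) t U V := by
  simp only [integrandI]
  have hN : (∏ i, ∏ j, if i < j then (-V i - -V j) ^ 2 * (-U i - -U j) ^ 2 else 1)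
      = ∏ i : Fin n, ∏ j : Fin n, if i < j then (U i - U j) ^ 2 * (V i - V j) ^ 2 else 1 := by
    refine Finset.prod_congr rfl fun i _ => Finset.prod_congr rfl fun j _ => ?_
    split_ifs with hij
    · ring
    · rfl
  have hD : (∏ i, ∏ j, (-V i - -U j) ^ 2) = ∏ i : Fin n, ∏ j : Fin n, (U i - V j) ^ 2 := by
    rw [Finset.prod_comm]
    exact Finset.prod_congr rfl fun i _ => Finset.prod_congr rfl fun j _ => by ring
  have hP : (∏ i, (1 + -U i) * (1 - -V i) * fExp h x t (-V i)
        / ((1 + -V i) * (1 - -U i) * fExp h x t (-U i)))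
      = ∏ i : Fin n, (1 + V i) * (1 - U i) * fExp h (-x) t (U i)
        / ((1 + U i) * (1 - V i) * fExp h (-x) t (V i)) :=
    Finset.prod_congr rfl fun i _ => (fExp_ratio_neg h x t (U i) (V i)).symm
  rw [hN, hD, hP, Hfun_neg]

lemma integrandIhat_neg (n : ℕ) (h x t : ℝ) (U V : Fin n → ℂ) :
    integrandIhat n h x t (fun i => -V i) (fun i => -U i) = integrandIhat n h (-x) t U V := by
  simp only [integrandIhat, integrandI_neg]
  have : (∑ i, (- -V i + -U i)) = ∑ i : Fin n, (-U i + V i) :=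
    Finset.sum_congr rfl fun i _ => by ring
  rw [this]

lemma contourProdIntegral_neg (n : ℕ) (F G : (Fin n → ℂ) → (Fin n → ℂ) → ℂ)
    (hFG : ∀ U V, G U V = F (fun i => -V i) (fun i => -U i)) :
    contourProdIntegral n G = contourProdIntegral n F := by
  rw [contourProdIntegral, contourProdIntegral]
  have step : ∀ a b : Fin n → ℝ,
      G (fun i => gammaL (a i)) (fun i => gammaR (b i)) *
        ((∏ i, deriv gammaL (a i) / (2 * Real.pi * Complex.I)) *
          ∏ i, deriv gammaR (b i) / (2 * Real.pi * Complex.I))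
      = F (fun i => gammaL ((-b) i)) (fun i => gammaR ((-a) i)) *
        ((∏ i, deriv gammaL ((-b) i) / (2 * Real.pi * Complex.I)) *
          ∏ i, deriv gammaR ((-a) i) / (2 * Real.pi * Complex.I)) := by
    intro a b
    rw [hFG]
    congr 1
    · congr 1
      · funext i
        rw [Pi.neg_apply, gammaL_eq_neg (-b i), neg_neg]
      · funext i
        rw [Pi.neg_apply, gammaR_eq_neg (-a i), neg_neg]
    · rw [mul_comm]
      congr 1
      · exact Finset.prod_congr rfl fun i _ => by rw [Pi.neg_apply, deriv_gammaR_eq]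
      · exact Finset.prod_congr rfl fun i _ => by rw [Pi.neg_apply, deriv_gammaL_eq]
  have h1 : MeasurePreserving (fun p : (Fin n → ℝ) × (Fin n → ℝ) => (-p.2, -p.1))
      volume volume := by
    rw [show (volume : Measure ((Fin n → ℝ) × (Fin n → ℝ))) = volume.prod volume from rfl]
    exact ((Measure.measurePreserving_neg (volume : Measure (Fin n → ℝ))).prod
        (Measure.measurePreserving_neg (volume : Measure (Fin n → ℝ)))).comp
      Measure.measurePreserving_swap
  have he : MeasurableEmbedding (fun p : (Fin n → ℝ) × (Fin n → ℝ) => (-p.2, -p.1)) :=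
    (MeasurableEquiv.prodComm.trans
      ((MeasurableEquiv.neg _).prodCongr (MeasurableEquiv.neg _))).measurableEmbedding
  calc (∫ sr : (Fin n → ℝ) × (Fin n → ℝ),
        G (fun i => gammaL (sr.1 i)) (fun i => gammaR (sr.2 i)) *
          ((∏ i, deriv gammaL (sr.1 i) / (2 * Real.pi * Complex.I)) *
            ∏ i, deriv gammaR (sr.2 i) / (2 * Real.pi * Complex.I)))
      = ∫ sr : (Fin n → ℝ) × (Fin n → ℝ),
          F (fun i => gammaL ((-sr.2) i)) (fun i => gammaR ((-sr.1) i)) *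
            ((∏ i, deriv gammaL ((-sr.2) i) / (2 * Real.pi * Complex.I)) *
              ∏ i, deriv gammaR ((-sr.1) i) / (2 * Real.pi * Complex.I)) := by
        congr 1
        funext sr
        exact step sr.1 sr.2
    _ = ∫ sr : (Fin n → ℝ) × (Fin n → ℝ),
          F (fun i => gammaL (sr.1 i)) (fun i => gammaR (sr.2 i)) *
            ((∏ i, deriv gammaL (sr.1 i) / (2 * Real.pi * Complex.I)) *
              ∏ i, deriv gammaR (sr.2 i) / (2 * Real.pi * Complex.I)) :=
        h1.integral_comp he (fun p : (Fin n → ℝ) × (Fin n → ℝ) =>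
          F (fun i => gammaL (p.1 i)) (fun i => gammaR (p.2 i)) *
            ((∏ i, deriv gammaL (p.1 i) / (2 * Real.pi * Complex.I)) *
              ∏ i, deriv gammaR (p.2 i) / (2 * Real.pi * Complex.I)))

lemma pC_neg (h x t : ℝ) : pC h (-x) t = pC h x t := by
  rw [pC, pC]
  refine tsum_congr fun n => ?_
  rw [contourProdIntegral_neg (n + 1) (integrandI (n + 1) h x t) (integrandI (n + 1) h (-x) t)
    (fun U V => (integrandI_neg (n + 1) h x t U V).symm)]

lemma pHatC_neg (h x t : ℝ) : pHatC h (-x) t = pHatC h x t := by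
  rw [pHatC, pHatC]
  refine tsum_congr fun n => ?_
  rw [contourProdIntegral_neg (n + 1) (integrandIhat (n + 1) h x t)
    (integrandIhat (n + 1) h (-x) t)
    (fun U V => (integrandIhat_neg (n + 1) h x t U V).symm)]

/-- `p` and `p̂` are symmetric in `x`. -/
theorem p_pHat_symmetric_in_x (h x t : ℝ) (ht : 0 < t) :
    pFun h x t = pFun h (-x) t ∧ pHatFun h x t = pHatFun h (-x) t := by
  constructor
  · rw [pFun, pFun, pC_neg]
  · rw [pHatFun, pHatFun, pHatC_neg]

end
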